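/- Let ϱ > 0 and 1 ≤ ℓ ≤ k. There exists a constant C = C(ϱ, ℓ) > 0 such that for all t ≥ 4ℓ + 4 and all y ∈ ℝ^k with Σ_{i=1}^{ℓ} y_i² ≤ t, the function f(y,t) = ϱ·√(1 + (1/(2t))·Σ_{i=1}^{ℓ}(y_i² − 2)) − ϱ is well defined and smooth and satisfies | ∂_t f − Δ_y f + (1/2)·⟨y, ∇_y f⟩ − (ϱ + f)/2 + ϱ²/(2(ϱ + f)) | ≤ C·(1 + |y|²)/t². That is, f is an approximate solution of the rotationally invariant rescaled graph equation ∂_t f = Δ f − (1/2)y·∇f + (ϱ+f)/2 − ϱ²/(2(ϱ+f)) with error of size O((1 + |y|²)/t²). -/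

import Mathlib

open Real

/-- The C¹ normal-form profile `f(t,y) = ϱ·√(1 + (1/(2t))·Σ_{i=1}^{ℓ}(y_i² − 2)) − ϱ`
over the cylinder of radius `ϱ`, as a function of time `t` and `y ∈ ℝ^k`. -/
noncomputable def profileF (k ℓ : ℕ) (ϱ : ℝ) (t : ℝ) (y : Fin k → ℝ) : ℝ :=
  ϱ * Real.sqrt (1 + 1 / (2 * t) * ∑ i : Fin k, if (i : ℕ) < ℓ then (y i) ^ 2 - 2 else 0) - ϱ

set_option maxHeartbeats 1000000 in
/-- `f(y,t) = ϱ√(1 + (1/(2t))Σ_{i=1}^{ℓ}(y_i² − 2)) − ϱ` is an approximate solution of the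
rotationally invariant rescaled graph equation
`∂_t f = Δf − (1/2)y·∇f + (ϱ+f)/2 − ϱ²/(2(ϱ+f))`, with error of size `C(1 + |y|²)/t²`
on the region `t ≥ 4ℓ + 4`, `Σ_{i=1}^{ℓ} y_i² ≤ t` (where the square root is of a positive
quantity, so `f` is well defined and smooth there).  Here the Laplacian is the sum of pure
second partial derivatives and `y·∇f = Σ_i y_i ∂_i f`. -/
theorem profile_approximate_solution (k ℓ : ℕ) (hℓ : 1 ≤ ℓ) (hk : ℓ ≤ k)
    (ϱ : ℝ) (hϱ : 0 < ϱ) :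
    ∃ C : ℝ, 0 < C ∧
      ∀ t : ℝ, (4 * ℓ + 4 : ℝ) ≤ t →
        ∀ y : Fin k → ℝ, (∑ i : Fin k, if (i : ℕ) < ℓ then (y i) ^ 2 else 0) ≤ t →
          (0 < 1 + 1 / (2 * t) * ∑ i : Fin k, if (i : ℕ) < ℓ then (y i) ^ 2 - 2 else 0) ∧
          |deriv (fun s => profileF k ℓ ϱ s y) t
              - (∑ i : Fin k,
                  deriv (deriv fun s => profileF k ℓ ϱ t (Function.update y i s)) (y i))
              + 1 / 2 * ∑ i : Fin k,
                  y i * deriv (fun s => profileF k ℓ ϱ t (Function.update y i s)) (y i)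
              - (ϱ + profileF k ℓ ϱ t y) / 2
              + ϱ ^ 2 / (2 * (ϱ + profileF k ℓ ϱ t y))|
            ≤ C * (1 + ∑ i : Fin k, (y i) ^ 2) / t ^ 2 := by
  refine ⟨3 * ϱ * ((ℓ : ℝ) + 1), by positivity, ?_⟩
  intro t ht y hSt
  have ht0 : (0 : ℝ) < t := by
    have : (0 : ℝ) < 4 * (ℓ : ℝ) + 4 := by positivity
    linarith
  have ht0' : t ≠ 0 := ne_of_gt ht0
  have hℓ1 : (1 : ℝ) ≤ (ℓ : ℝ) := by exact_mod_cast hℓ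
  set N : ℝ := ∑ i : Fin k, (y i) ^ 2 with hNdef
  set S : ℝ := ∑ i : Fin k, if (i : ℕ) < ℓ then (y i) ^ 2 else 0 with hSdef
  set Q : ℝ := ∑ i : Fin k, if (i : ℕ) < ℓ then (y i) ^ 2 - 2 else 0 with hQdef
  clear_value N S Q
  -- cardinality of the filtered index set
  have hcard : (Finset.univ.filter (fun i : Fin k => (i : ℕ) < ℓ)).card = ℓ := by
    have h : Finset.univ.filter (fun i : Fin k => (i : ℕ) < ℓ)
        = (Finset.range ℓ).attachFin
            (fun m hm => lt_of_lt_of_le (Finset.mem_range.mp hm) hk) := by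
      ext i
      simp [Finset.mem_attachFin, Finset.mem_filter, Finset.mem_range]
    rw [h, Finset.card_attachFin, Finset.card_range]
  have hone : (∑ i : Fin k, if (i : ℕ) < ℓ then (1 : ℝ) else 0) = (ℓ : ℝ) := by
    rw [← Finset.sum_filter, Finset.sum_const, hcard, nsmul_eq_mul, mul_one]
  have hQS : Q = S - 2 * ℓ := by
    rw [hQdef, hSdef]
    have h : ∀ i : Fin k, (if (i : ℕ) < ℓ then (y i) ^ 2 - 2 else 0)
        = (if (i : ℕ) < ℓ then (y i) ^ 2 else 0) - 2 * (if (i : ℕ) < ℓ then (1 : ℝ) else 0) := by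
      intro i; split_ifs <;> ring
    rw [Finset.sum_congr rfl (fun i _ => h i), Finset.sum_sub_distrib, ← Finset.mul_sum, hone]
  have hS0 : (0 : ℝ) ≤ S := by
    rw [hSdef]
    apply Finset.sum_nonneg
    intro i _
    split_ifs
    · positivity
    · exact le_rfl
  have hN0 : (0 : ℝ) ≤ N := by
    rw [hNdef]; positivity
  have hSN : S ≤ N := by
    rw [hSdef, hNdef]
    apply Finset.sum_le_sum
    intro i _
    split_ifs
    · exact le_rfl
    · positivity
  have hSi : ∀ i : Fin k, (i : ℕ) < ℓ → (y i) ^ 2 ≤ S := by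
    intro i hi
    rw [hSdef]
    have h := Finset.single_le_sum
      (f := fun j : Fin k => if (j : ℕ) < ℓ then (y j) ^ 2 else 0)
      (fun j _ => by split_ifs; exacts [sq_nonneg _, le_rfl]) (Finset.mem_univ i)
    simpa [if_pos hi] using h
  -- bounds on u
  set u : ℝ := 1 + 1 / (2 * t) * Q with hu
  clear_value u
  have hlt4 : (ℓ : ℝ) / t ≤ 1 / 4 := by
    rw [div_le_iff₀ ht0]; linarith
  have hQlb : -(2 * (ℓ : ℝ)) ≤ Q := by rw [hQS]; linarith
  have hu34 : 3 / 4 ≤ u := by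
    rw [hu]
    have h1 : 1 / (2 * t) * (-(2 * (ℓ : ℝ))) ≤ 1 / (2 * t) * Q :=
      mul_le_mul_of_nonneg_left hQlb (by positivity)
    have h2 : 1 / (2 * t) * (-(2 * (ℓ : ℝ))) = -((ℓ : ℝ) / t) := by
      field_simp
      try ring
    rw [h2] at h1
    linarith
  have hu32 : u ≤ 3 / 2 := by
    rw [hu]
    have h1 : 1 / (2 * t) * Q ≤ 1 / (2 * t) * S :=
      mul_le_mul_of_nonneg_left (by rw [hQS]; linarith) (by positivity)
    have h2 : 1 / (2 * t) * S ≤ 1 / 2 := by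
      rw [show 1 / (2 * t) * S = S / (2 * t) by ring, div_le_iff₀ (by linarith)]
      linarith
    linarith
  have hupos : (0 : ℝ) < u := lt_of_lt_of_le (by norm_num) hu34
  refine ⟨hu ▸ hupos, ?_⟩
  set r : ℝ := Real.sqrt u with hr
  have hr0 : 0 < r := Real.sqrt_pos.mpr hupos
  clear_value r
  have hrne : r ≠ 0 := ne_of_gt hr0
  have hr2 : r ^ 2 = u := by rw [hr]; exact Real.sq_sqrt hupos.le
  have hr2ge : 3 / 4 ≤ r ^ 2 := by rw [hr2]; exact hu34
  have hr2le : r ^ 2 ≤ 3 / 2 := by rw [hr2]; exact hu32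
  have hrlb : (43 : ℝ) / 50 ≤ r := by nlinarith [hr2ge, hr0.le]
  have hr3 : (1 : ℝ) / 2 ≤ r ^ 3 := by
    nlinarith [mul_nonneg (by linarith : (0:ℝ) ≤ r - 43 / 50)
      (by linarith : (0:ℝ) ≤ r ^ 2 - 3 / 4), hrlb, hr2ge]
  have hune0 : 1 + 1 / (2 * t) * Q ≠ 0 := by rw [← hu]; exact ne_of_gt hupos
  -- value of f
  have hf : ϱ + profileF k ℓ ϱ t y = ϱ * r := by
    simp only [profileF]
    rw [← hQdef, ← hu, ← hr]
    ring
  -- time derivative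
  have hDt : deriv (fun s => profileF k ℓ ϱ s y) t = -(ϱ * Q) / (4 * t ^ 2 * r) := by
    have hfun : (fun s => profileF k ℓ ϱ s y)
        = fun s => ϱ * Real.sqrt (1 + 1 / (2 * s) * Q) - ϱ := by
      funext s; simp only [profileF]; rw [← hQdef]
    have h1 : HasDerivAt (fun s : ℝ => 2 * s) (2 * 1) t := (hasDerivAt_id t).const_mul 2
    have h2 : HasDerivAt (fun s : ℝ => 1 + 1 / (2 * s) * Q)
        ((0 * (2 * t) - 1 * (2 * 1)) / (2 * t) ^ 2 * Q) t :=
      (((hasDerivAt_const t (1 : ℝ)).div h1 (by positivity)).mul_const Q).const_add 1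
    have h3 : HasDerivAt (fun s : ℝ => ϱ * Real.sqrt (1 + 1 / (2 * s) * Q) - ϱ)
        (ϱ * ((0 * (2 * t) - 1 * (2 * 1)) / (2 * t) ^ 2 * Q
          / (2 * Real.sqrt (1 + 1 / (2 * t) * Q)))) t :=
      ((h2.sqrt hune0).const_mul ϱ).sub_const ϱ
    rw [hfun, h3.deriv, ← hu, ← hr]
    field_simp
    ring
  -- the sum over the updated coordinate
  have hsum_upd : ∀ (i : Fin k) (s : ℝ),
      (∑ j : Fin k, if (j : ℕ) < ℓ then (Function.update y i s j) ^ 2 - 2 else 0)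
        = Q + (if (i : ℕ) < ℓ then s ^ 2 - (y i) ^ 2 else 0) := by
    intro i s
    have h1 : (∑ j : Fin k, if (j : ℕ) < ℓ then (Function.update y i s j) ^ 2 - 2 else 0)
        = ∑ j : Fin k, Function.update
            (fun j : Fin k => if (j : ℕ) < ℓ then (y j) ^ 2 - 2 else 0) i
            (if (i : ℕ) < ℓ then s ^ 2 - 2 else 0) j := by
      refine Finset.sum_congr rfl (fun j _ => ?_)
      rcases eq_or_ne j i with rfl | hji
      · simp
      · simp [Function.update_of_ne hji]
    rw [h1, Finset.sum_update_of_mem (Finset.mem_univ i), hQdef,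
      Finset.sum_eq_sum_sdiff_singleton_add (Finset.mem_univ i)
        (fun j : Fin k => if (j : ℕ) < ℓ then (y j) ^ 2 - 2 else 0)]
    split_ifs <;> ring
  -- spatial derivatives
  have hD1 : ∀ i : Fin k,
      deriv (fun s => profileF k ℓ ϱ t (Function.update y i s)) (y i)
        = if (i : ℕ) < ℓ then ϱ * y i / (2 * t * r) else 0 := by
    intro i
    by_cases hi : (i : ℕ) < ℓ
    · have hfun : (fun s => profileF k ℓ ϱ t (Function.update y i s))
          = fun s => ϱ * Real.sqrt (1 + 1 / (2 * t) * (s ^ 2 + (Q - (y i) ^ 2))) - ϱ := by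
        funext s; simp only [profileF]
        rw [hsum_upd i s, if_pos hi]
        ring_nf
      have hclb : -(2 * (ℓ : ℝ)) ≤ Q - (y i) ^ 2 := by
        have := hSi i hi; rw [hQS]; linarith
      have hapos : ∀ s : ℝ, 0 < 1 + 1 / (2 * t) * (s ^ 2 + (Q - (y i) ^ 2)) := by
        intro s
        have h1 : 1 / (2 * t) * (0 + -(2 * (ℓ : ℝ)))
            ≤ 1 / (2 * t) * (s ^ 2 + (Q - (y i) ^ 2)) :=
          mul_le_mul_of_nonneg_left (by linarith [sq_nonneg s]) (by positivity)
        have h2 : 1 / (2 * t) * ((0 : ℝ) + -(2 * (ℓ : ℝ))) = -((ℓ : ℝ) / t) := by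
          field_simp
          try ring
        rw [h2] at h1
        linarith
      have ha' : ∀ s : ℝ, HasDerivAt
          (fun s : ℝ => 1 + 1 / (2 * t) * (s ^ 2 + (Q - (y i) ^ 2)))
          (1 / (2 * t) * (2 * s)) s := by
        intro s
        have h := (((hasDerivAt_pow 2 s).add_const (Q - (y i) ^ 2)).const_mul
          (1 / (2 * t))).const_add 1
        refine h.congr_deriv ?_
        push_cast
        ring
      have hF : ∀ s : ℝ, HasDerivAt
          (fun s => ϱ * Real.sqrt (1 + 1 / (2 * t) * (s ^ 2 + (Q - (y i) ^ 2))) - ϱ)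
          (ϱ * ((1 / (2 * t) * (2 * s))
            / (2 * Real.sqrt (1 + 1 / (2 * t) * (s ^ 2 + (Q - (y i) ^ 2)))))) s :=
        fun s => (((ha' s).sqrt (ne_of_gt (hapos s))).const_mul ϱ).sub_const ϱ
      have hayi : 1 + 1 / (2 * t) * ((y i) ^ 2 + (Q - (y i) ^ 2)) = u := by
        rw [hu]; ring
      rw [hfun, (hF (y i)).deriv, if_pos hi]
      rw [hayi, ← hr]
      field_simp
    · have hfun : (fun s => profileF k ℓ ϱ t (Function.update y i s))
          = fun _ => ϱ * Real.sqrt (1 + 1 / (2 * t) * Q) - ϱ := by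
        funext s; simp only [profileF]
        rw [hsum_upd i s, if_neg hi, add_zero]
      rw [hfun, if_neg hi, deriv_const]
  have hD2 : ∀ i : Fin k,
      deriv (deriv fun s => profileF k ℓ ϱ t (Function.update y i s)) (y i)
        = if (i : ℕ) < ℓ then ϱ / (2 * t * r) - ϱ * (y i) ^ 2 / (4 * t ^ 2 * r ^ 3) else 0 := by
    intro i
    by_cases hi : (i : ℕ) < ℓ
    · have hfun : (fun s => profileF k ℓ ϱ t (Function.update y i s))
          = fun s => ϱ * Real.sqrt (1 + 1 / (2 * t) * (s ^ 2 + (Q - (y i) ^ 2))) - ϱ := by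
        funext s; simp only [profileF]
        rw [hsum_upd i s, if_pos hi]
        ring_nf
      have hclb : -(2 * (ℓ : ℝ)) ≤ Q - (y i) ^ 2 := by
        have := hSi i hi; rw [hQS]; linarith
      have hapos : ∀ s : ℝ, 0 < 1 + 1 / (2 * t) * (s ^ 2 + (Q - (y i) ^ 2)) := by
        intro s
        have h1 : 1 / (2 * t) * (0 + -(2 * (ℓ : ℝ)))
            ≤ 1 / (2 * t) * (s ^ 2 + (Q - (y i) ^ 2)) :=
          mul_le_mul_of_nonneg_left (by linarith [sq_nonneg s]) (by positivity)
        have h2 : 1 / (2 * t) * ((0 : ℝ) + -(2 * (ℓ : ℝ))) = -((ℓ : ℝ) / t) := by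
          field_simp
          try ring
        rw [h2] at h1
        linarith
      have ha' : ∀ s : ℝ, HasDerivAt
          (fun s : ℝ => 1 + 1 / (2 * t) * (s ^ 2 + (Q - (y i) ^ 2)))
          (1 / (2 * t) * (2 * s)) s := by
        intro s
        have h := (((hasDerivAt_pow 2 s).add_const (Q - (y i) ^ 2)).const_mul
          (1 / (2 * t))).const_add 1
        refine h.congr_deriv ?_
        push_cast
        ring
      have hF : ∀ s : ℝ, HasDerivAt
          (fun s => ϱ * Real.sqrt (1 + 1 / (2 * t) * (s ^ 2 + (Q - (y i) ^ 2))) - ϱ)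
          (ϱ * ((1 / (2 * t) * (2 * s))
            / (2 * Real.sqrt (1 + 1 / (2 * t) * (s ^ 2 + (Q - (y i) ^ 2)))))) s :=
        fun s => (((ha' s).sqrt (ne_of_gt (hapos s))).const_mul ϱ).sub_const ϱ
      have hayi : 1 + 1 / (2 * t) * ((y i) ^ 2 + (Q - (y i) ^ 2)) = u := by
        rw [hu]; ring
      have hd1fun : deriv (fun s =>
          ϱ * Real.sqrt (1 + 1 / (2 * t) * (s ^ 2 + (Q - (y i) ^ 2))) - ϱ)
          = fun s => ϱ * ((1 / (2 * t) * (2 * s))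
            / (2 * Real.sqrt (1 + 1 / (2 * t) * (s ^ 2 + (Q - (y i) ^ 2))))) :=
        funext fun s => (hF s).deriv
      have hsqne : 2 * Real.sqrt (1 + 1 / (2 * t) * ((y i) ^ 2 + (Q - (y i) ^ 2))) ≠ 0 := by
        have h := Real.sqrt_pos.mpr (hapos (y i))
        positivity
      have hn : HasDerivAt (fun s : ℝ => 1 / (2 * t) * (2 * s))
          (1 / (2 * t) * (2 * 1)) (y i) :=
        ((hasDerivAt_id (y i)).const_mul 2).const_mul (1 / (2 * t))
      have hd : HasDerivAt (fun s : ℝ =>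
          2 * Real.sqrt (1 + 1 / (2 * t) * (s ^ 2 + (Q - (y i) ^ 2))))
          (2 * ((1 / (2 * t) * (2 * y i))
            / (2 * Real.sqrt (1 + 1 / (2 * t) * ((y i) ^ 2 + (Q - (y i) ^ 2)))))) (y i) :=
        ((ha' (y i)).sqrt (ne_of_gt (hapos (y i)))).const_mul 2
      have hG : HasDerivAt (fun s : ℝ => ϱ * ((1 / (2 * t) * (2 * s))
            / (2 * Real.sqrt (1 + 1 / (2 * t) * (s ^ 2 + (Q - (y i) ^ 2))))))
          (ϱ * ((1 / (2 * t) * (2 * 1)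
              * (2 * Real.sqrt (1 + 1 / (2 * t) * ((y i) ^ 2 + (Q - (y i) ^ 2))))
            - 1 / (2 * t) * (2 * y i)
              * (2 * ((1 / (2 * t) * (2 * y i))
                / (2 * Real.sqrt (1 + 1 / (2 * t) * ((y i) ^ 2 + (Q - (y i) ^ 2)))))))
            / (2 * Real.sqrt (1 + 1 / (2 * t) * ((y i) ^ 2 + (Q - (y i) ^ 2)))) ^ 2)) (y i) :=
        (hn.div hd hsqne).const_mul ϱ
      rw [hfun, hd1fun, hG.deriv, if_pos hi, hayi, ← hr]
      field_simp
      ring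
    · have hfun : (fun s => profileF k ℓ ϱ t (Function.update y i s))
          = fun _ => ϱ * Real.sqrt (1 + 1 / (2 * t) * Q) - ϱ := by
        funext s; simp only [profileF]
        rw [hsum_upd i s, if_neg hi, add_zero]
      rw [hfun, if_neg hi]
      simp
  -- assemble the sums
  have hsum2 : (∑ i : Fin k,
      deriv (deriv fun s => profileF k ℓ ϱ t (Function.update y i s)) (y i))
        = (ℓ : ℝ) * (ϱ / (2 * t * r)) - S * (ϱ / (4 * t ^ 2 * r ^ 3)) := by
    rw [show (∑ i : Fin k,
        deriv (deriv fun s => profileF k ℓ ϱ t (Function.update y i s)) (y i))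
        = ∑ i : Fin k, ((if (i : ℕ) < ℓ then (1 : ℝ) else 0) * (ϱ / (2 * t * r))
            - (if (i : ℕ) < ℓ then (y i) ^ 2 else 0) * (ϱ / (4 * t ^ 2 * r ^ 3)))
      from Finset.sum_congr rfl (fun i _ => by rw [hD2 i]; split_ifs <;> ring)]
    rw [Finset.sum_sub_distrib, ← Finset.sum_mul, ← Finset.sum_mul, hone, ← hSdef]
  have hsum1 : (∑ i : Fin k,
      y i * deriv (fun s => profileF k ℓ ϱ t (Function.update y i s)) (y i))
        = S * (ϱ / (2 * t * r)) := by
    rw [show (∑ i : Fin k,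
        y i * deriv (fun s => profileF k ℓ ϱ t (Function.update y i s)) (y i))
        = ∑ i : Fin k, (if (i : ℕ) < ℓ then (y i) ^ 2 else 0) * (ϱ / (2 * t * r))
      from Finset.sum_congr rfl (fun i _ => by rw [hD1 i]; split_ifs <;> ring)]
    rw [← Finset.sum_mul, ← hSdef]
  rw [hDt, hsum2, hsum1, hf]
  -- closed form of the error
  have h2tr : 2 * t * r ^ 2 = 2 * t + Q := by
    rw [hr2, hu]; field_simp; try ring
  have hQr : Q = 2 * t * r ^ 2 - 2 * t := by linarith
  have hS2 : S = 2 * t * r ^ 2 - 2 * t + 2 * ℓ := by rw [hQS] at hQr; linarith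
  have hXeq : -(ϱ * Q) / (4 * t ^ 2 * r)
      - ((ℓ : ℝ) * (ϱ / (2 * t * r)) - S * (ϱ / (4 * t ^ 2 * r ^ 3)))
      + 1 / 2 * (S * (ϱ / (2 * t * r))) - ϱ * r / 2 + ϱ ^ 2 / (2 * (ϱ * r))
      = ϱ * (S - Q * r ^ 2) / (4 * t ^ 2 * r ^ 3) := by
    rw [hS2, hQr]
    field_simp
    ring
  rw [hXeq]
  -- final estimate
  have hQabs : |Q| ≤ S + 2 * (ℓ : ℝ) :=
    abs_le.mpr ⟨by rw [hQS]; linarith, by rw [hQS]; linarith⟩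
  have hnum : |ϱ * (S - Q * r ^ 2)| ≤ 3 * ϱ * ((ℓ : ℝ) + 1) * (1 + N) := by
    rw [abs_mul, abs_of_pos hϱ]
    have h1 : |S - Q * r ^ 2| ≤ S + (S + 2 * (ℓ : ℝ)) * (3 / 2) := by
      calc |S - Q * r ^ 2| = |S + -(Q * r ^ 2)| := by rw [sub_eq_add_neg]
        _ ≤ |S| + |-(Q * r ^ 2)| := abs_add_le _ _
        _ = S + |Q| * r ^ 2 := by
            rw [abs_neg, abs_mul, abs_of_nonneg hS0, abs_of_nonneg (sq_nonneg r)]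
        _ ≤ S + (S + 2 * (ℓ : ℝ)) * (3 / 2) := by
            have h := mul_le_mul hQabs hr2le (sq_nonneg r) (by linarith [abs_nonneg Q])
            linarith
    have h4 : S + (S + 2 * (ℓ : ℝ)) * (3 / 2) ≤ 3 * ((ℓ : ℝ) + 1) * (1 + N) := by
      have hln : 0 ≤ (ℓ : ℝ) * N := mul_nonneg (by positivity) hN0
      nlinarith
    calc ϱ * |S - Q * r ^ 2| ≤ ϱ * (S + (S + 2 * (ℓ : ℝ)) * (3 / 2)) :=
          mul_le_mul_of_nonneg_left h1 hϱ.le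
      _ ≤ ϱ * (3 * ((ℓ : ℝ) + 1) * (1 + N)) := mul_le_mul_of_nonneg_left h4 hϱ.le
      _ = 3 * ϱ * ((ℓ : ℝ) + 1) * (1 + N) := by ring
  have hdenpos : (0 : ℝ) < 4 * t ^ 2 * r ^ 3 := by positivity
  rw [abs_div, abs_of_pos hdenpos]
  exact div_le_div₀ (by positivity) hnum (by positivity)
    (by nlinarith [sq_nonneg t])
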